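/- For the annulus Ω_r = {r < |z| < 1}, the Szegő metric at the point r^{1/5} in the unit direction satisfies lim_{r→0⁺} F_S^{Ω_r}(r^{1/5}, 1) = 1. -/

import Mathlib

open Real Filter Topology

/-- `α₀(r,t) = S_r(t,t)`: diagonal Szegő kernel of the annulus `{r < |z| < 1}` w.r.t.
arclength, at a point of modulus `t`. -/
noncomputable def alpha0 (r t : ℝ) : ℝ := (1/(2*π)) * ∑' n : ℤ, t ^ (2*n) / (1 + r ^ (2*n+1))

/-- `α₁(r,t) = ∂_z S_r(z,z)` at `z = t > 0`. -/
noncomputable def alpha1 (r t : ℝ) : ℝ :=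
  (1/(2*π)) * ∑' n : ℤ, (n : ℝ) * t ^ (2*n-1) / (1 + r ^ (2*n+1))

/-- `α₂(r,t) = ∂_z∂_z̄ S_r(z,z)` at `z = t > 0`. -/
noncomputable def alpha2 (r t : ℝ) : ℝ :=
  (1/(2*π)) * ∑' n : ℤ, (n : ℝ)^2 * t ^ (2*n-2) / (1 + r ^ (2*n+1))

/-- The squared Szegő metric of the annulus at the point `t` in the unit direction:
`F_S(t,1)² = (α₀α₂ - α₁²)/α₀²`. -/
noncomputable def szegoMetricSq (r t : ℝ) : ℝ :=
  (alpha0 r t * alpha2 r t - (alpha1 r t)^2) / (alpha0 r t)^2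

/-- The generic summand: `n^j · r^{(2n-j)/5} / (1 + r^{2n+1})`. -/
noncomputable def szTerm (j : ℕ) (n : ℤ) (r : ℝ) : ℝ :=
  (n:ℝ)^j * r ^ (((2*n - j : ℤ) : ℝ)/5) / (1 + r ^ ((2*n+1 : ℤ) : ℝ))

lemma sz_hpow (c : ℝ) (hc : 0 < c) : Tendsto (fun r:ℝ => r ^ c) (𝓝[>](0:ℝ)) (𝓝 0) := by
  have := (Real.continuousAt_rpow_const 0 c (Or.inr hc.le)).tendsto
  simpa [Real.zero_rpow hc.ne'] using this.mono_left nhdsWithin_le_nhds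

lemma sz_tendsto_term (j : ℕ) (hj : j ≤ 2) (n : ℤ) :
    Tendsto (szTerm j n) (𝓝[>](0:ℝ))
      (𝓝 (if 2*n = (j:ℤ) then (n:ℝ)^j else 0)) := by
  rcases le_or_gt 0 n with hn | hn
  · -- n ≥ 0 : denominator → 1
    have hn' : (0:ℝ) ≤ (n:ℝ) := by exact_mod_cast hn
    have hd : Tendsto (fun r:ℝ => 1 + r ^ ((2*n+1 : ℤ) : ℝ)) (𝓝[>](0:ℝ)) (𝓝 1) := by
      have h := sz_hpow ((2*n+1 : ℤ) : ℝ) (by push_cast; linarith)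
      simpa using tendsto_const_nhds.add h
    rcases lt_trichotomy (2*n) (j:ℤ) with h2 | h2 | h2
    · -- forces n = 0, j ≥ 1, term constantly 0
      have hn0 : n = 0 := by omega
      have hj1 : 1 ≤ j := by omega
      have : szTerm j n = fun _ => 0 := by
        funext r
        simp [szTerm, hn0, zero_pow (by omega : j ≠ 0)]
      rw [this, if_neg (by omega)]
      exact tendsto_const_nhds
    · -- 2n = j : exponent of numerator is 0
      rw [if_pos h2]
      have he : ((2*n - j : ℤ) : ℝ)/5 = 0 := by
        rw [h2]; simp
      have : szTerm j n = fun r => (n:ℝ)^j / (1 + r ^ ((2*n+1 : ℤ) : ℝ)) := by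
        funext r; simp only [szTerm]; rw [he, Real.rpow_zero, mul_one]
      rw [this]
      have h := (tendsto_const_nhds (x := (n:ℝ)^j)).div hd one_ne_zero
      rw [div_one] at h
      exact h.congr fun r => rfl
    · -- 2n > j : numerator → 0
      rw [if_neg (by omega)]
      have he : (0:ℝ) < ((2*n - j : ℤ) : ℝ)/5 := by
        have : (0:ℤ) < 2*n - j := by omega
        have : (0:ℝ) < ((2*n - j : ℤ) : ℝ) := by exact_mod_cast this
        linarith
      have hnum : Tendsto (fun r:ℝ => (n:ℝ)^j * r ^ (((2*n - j : ℤ) : ℝ)/5))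
          (𝓝[>](0:ℝ)) (𝓝 0) := by
        simpa using (sz_hpow _ he).const_mul ((n:ℝ)^j)
      simpa using (hnum.div hd one_ne_zero).congr (fun r => rfl : ∀ r, _ = szTerm j n r)
  · -- n < 0
    rw [if_neg (by omega)]
    have hrw : ∀ r : ℝ, 0 < r → szTerm j n r =
        (n:ℝ)^j * r ^ (((2*n - j : ℤ) : ℝ)/5 - ((2*n+1 : ℤ) : ℝ)) /
          (r ^ (-((2*n+1 : ℤ) : ℝ)) + 1) := by
      intro r hr
      have hd0 : (0:ℝ) < r ^ ((2*n+1 : ℤ) : ℝ) := Real.rpow_pos_of_pos hr _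
      have h1 : 1 + r ^ ((2*n+1 : ℤ) : ℝ)
          = r ^ ((2*n+1 : ℤ) : ℝ) * (r ^ (-((2*n+1 : ℤ) : ℝ)) + 1) := by
        rw [mul_add, mul_one, ← Real.rpow_add hr, add_neg_cancel, Real.rpow_zero,
          add_comm]
      rw [szTerm, h1, ← div_div, mul_div_assoc, ← Real.rpow_sub hr]
    have hkey : Tendsto (fun r:ℝ =>
        (n:ℝ)^j * r ^ (((2*n - j : ℤ) : ℝ)/5 - ((2*n+1 : ℤ) : ℝ)) /
          (r ^ (-((2*n+1 : ℤ) : ℝ)) + 1)) (𝓝[>](0:ℝ)) (𝓝 0) := by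
      have he : (0:ℝ) < ((2*n - j : ℤ) : ℝ)/5 - ((2*n+1 : ℤ) : ℝ) := by
        have h8 : (0:ℤ) < -8*n - j - 5 := by omega
        have : (0:ℝ) < ((-8*n - j - 5 : ℤ) : ℝ) := by exact_mod_cast h8
        push_cast at this ⊢
        linarith
      have hd2 : (0:ℝ) < -((2*n+1 : ℤ) : ℝ) := by
        have : (0:ℤ) < -(2*n+1) := by omega
        exact_mod_cast this
      have hnum : Tendsto (fun r:ℝ => (n:ℝ)^j * r ^ (((2*n - j : ℤ) : ℝ)/5 - ((2*n+1 : ℤ) : ℝ)))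
          (𝓝[>](0:ℝ)) (𝓝 0) := by simpa using (sz_hpow _ he).const_mul ((n:ℝ)^j)
      have hden : Tendsto (fun r:ℝ => r ^ (-((2*n+1 : ℤ) : ℝ)) + 1) (𝓝[>](0:ℝ)) (𝓝 1) := by
        simpa using (sz_hpow _ hd2).add tendsto_const_nhds
      simpa [Pi.div_def] using hnum.div hden one_ne_zero
    refine hkey.congr' ?_
    filter_upwards [self_mem_nhdsWithin] with r hr
    exact (hrw r hr).symm

lemma sz_term_bound (j : ℕ) (hj : j ≤ 2) (n : ℤ) (r : ℝ) (hr : 0 < r) (hr2 : r ≤ 1/2) :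
    |szTerm j n r| ≤ 4*((n:ℝ)^2+1)*((1/2:ℝ)^((1:ℝ)/5)) ^ n.natAbs := by
  set w : ℝ := (1/2:ℝ)^((1:ℝ)/5) with hw
  have hw0 : 0 < w := Real.rpow_pos_of_pos (by norm_num) _
  have hw1 : w ≤ 1 := (Real.rpow_le_one (by norm_num) (by norm_num) (by norm_num))
  have hwhalf : 1/2 ≤ w := by
    rw [hw]
    nth_rewrite 1 [show (1/2:ℝ) = (1/2:ℝ) ^ (1:ℝ) by rw [Real.rpow_one]]
    exact Real.rpow_le_rpow_of_exponent_ge (by norm_num) (by norm_num) (by norm_num)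
  have hwpow : ∀ m : ℕ, (1/2:ℝ) ^ ((m:ℝ)/5) = w ^ m := by
    intro m
    rw [show (m:ℝ)/5 = (1:ℝ)/5 * m by ring, Real.rpow_mul (by norm_num), Real.rpow_natCast]
  have hr1 : r ≤ 1 := hr2.trans (by norm_num)
  set d : ℝ := ((2*n+1 : ℤ) : ℝ) with hd
  set e : ℝ := ((2*n - j : ℤ) : ℝ)/5 with he
  have hd0 : (0:ℝ) < 1 + r ^ d := by positivity
  have habs : |szTerm j n r| = |(n:ℝ)|^j * r ^ e / (1 + r ^ d) := by
    rw [szTerm, abs_div, abs_mul, abs_pow, abs_of_pos (Real.rpow_pos_of_pos hr _),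
      abs_of_pos hd0]
  set m : ℕ := n.natAbs with hm
  have hnabs : |(n:ℝ)| = (m:ℝ) := by
    rw [← Int.cast_abs, Int.abs_eq_natAbs]; norm_cast
  rcases lt_trichotomy n 0 with hn | hn | hn
  · -- n ≤ -1
    have hm1 : 1 ≤ m := by omega
    have hnm : (n:ℝ) = -(m:ℝ) := by
      have : n = -(m:ℤ) := by omega
      rw [this]; push_cast; ring
    have step1 : r ^ e / (1 + r ^ d) ≤ r ^ e / r ^ d := by
      apply div_le_div_of_nonneg_left (Real.rpow_pos_of_pos hr _).le
        (Real.rpow_pos_of_pos hr _)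
      linarith [Real.rpow_pos_of_pos hr d]
    have step2 : r ^ e / r ^ d = r ^ (e - d) := (Real.rpow_sub hr _ _).symm
    have hexp : (m:ℝ)/5 ≤ e - d := by
      rw [he, hd]
      push_cast
      rw [hnm]
      have hj' : (j:ℝ) ≤ 2 := by exact_mod_cast hj
      have hm' : (1:ℝ) ≤ (m:ℝ) := by exact_mod_cast hm1
      linarith
    have step3 : r ^ (e - d) ≤ (1/2:ℝ) ^ ((m:ℝ)/5) := by
      calc r ^ (e - d) ≤ r ^ ((m:ℝ)/5) :=
            Real.rpow_le_rpow_of_exponent_ge hr hr1 hexp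
        _ ≤ (1/2:ℝ) ^ ((m:ℝ)/5) := Real.rpow_le_rpow hr.le hr2 (by positivity)
    have hmj : |(n:ℝ)|^j ≤ (m:ℝ)^2 := by
      rw [hnabs]
      exact pow_le_pow_right₀ (by exact_mod_cast hm1) hj
    rw [habs, mul_div_assoc]
    have h1 : r ^ e / (1 + r ^ d) ≤ w ^ m := by
      rw [← hwpow m]
      rw [step2] at step1
      exact step1.trans step3
    have h2 : (0:ℝ) ≤ r ^ e / (1 + r ^ d) := by positivity
    have h3 := mul_le_mul hmj h1 h2 (by positivity : (0:ℝ) ≤ (m:ℝ)^2)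
    have hn2 : (n:ℝ)^2 = (m:ℝ)^2 := by rw [hnm]; ring
    rw [hn2]
    nlinarith [pow_nonneg hw0.le m]
  · -- n = 0
    subst hn
    rcases Nat.eq_zero_or_pos j with hj0 | hj1
    · subst hj0
      have : |szTerm 0 0 r| = r ^ e / (1 + r ^ d) := by
        rw [habs]; norm_num
      rw [this]
      have he0 : e = 0 := by rw [he]; norm_num
      have : r ^ e / (1 + r ^ d) ≤ 1 := by
        rw [he0, Real.rpow_zero]
        rw [div_le_one hd0]
        linarith [Real.rpow_pos_of_pos hr d]
      calc r ^ e / (1 + r ^ d) ≤ 1 := this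
        _ ≤ _ := by norm_num
    · have : |szTerm j 0 r| = 0 := by
        rw [habs]
        simp [zero_pow (by omega : j ≠ 0)]
      rw [this]; positivity
  · -- n ≥ 1
    have hm1 : 1 ≤ m := by omega
    have hnm : (n:ℝ) = (m:ℝ) := by
      have : n = (m:ℤ) := by omega
      rw [this]; push_cast; ring
    have step1 : r ^ e / (1 + r ^ d) ≤ r ^ e := by
      apply div_le_self (Real.rpow_pos_of_pos hr _).le
      linarith [Real.rpow_pos_of_pos hr d]
    have hexp : ((m:ℝ)-1)/5 ≤ e := by
      rw [he]; push_cast; rw [hnm]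
      have hj' : (j:ℝ) ≤ 2 := by exact_mod_cast hj
      have hm' : (1:ℝ) ≤ (m:ℝ) := by exact_mod_cast hm1
      linarith
    have hcast : (((m-1 : ℕ)):ℝ) = (m:ℝ) - 1 := by
      have : (1:ℕ) ≤ m := hm1
      push_cast [this]; ring
    have step3 : r ^ e ≤ w ^ (m-1) := by
      rw [← hwpow (m-1), hcast]
      calc r ^ e ≤ r ^ (((m:ℝ)-1)/5) :=
            Real.rpow_le_rpow_of_exponent_ge hr hr1 hexp
        _ ≤ (1/2:ℝ) ^ (((m:ℝ)-1)/5) := by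
            apply Real.rpow_le_rpow hr.le hr2
            have hm' : (1:ℝ) ≤ (m:ℝ) := by exact_mod_cast hm1
            linarith
    have step4 : w ^ (m-1) ≤ 2 * w ^ m := by
      have hsucc : w ^ m = w ^ (m-1) * w := by
        rw [← pow_succ]
        congr 1
        omega
      nlinarith [pow_nonneg hw0.le (m-1)]
    have hmj : |(n:ℝ)|^j ≤ (m:ℝ)^2 := by
      rw [hnabs]
      exact pow_le_pow_right₀ (by exact_mod_cast hm1) hj
    have hn2 : (n:ℝ)^2 = (m:ℝ)^2 := by rw [hnm]
    have h2 : (0:ℝ) ≤ r ^ e / (1 + r ^ d) := by positivity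
    rw [habs, mul_div_assoc]
    have h3 := mul_le_mul hmj (step1.trans (step3.trans step4)) h2
      (by positivity : (0:ℝ) ≤ (m:ℝ)^2)
    rw [hn2]
    nlinarith [pow_nonneg hw0.le m]

lemma sz_summable_bound :
    Summable (fun n : ℤ => 4*((n:ℝ)^2+1)*((1/2:ℝ)^((1:ℝ)/5)) ^ n.natAbs) := by
  set w : ℝ := (1/2:ℝ)^((1:ℝ)/5) with hw
  have hw0 : 0 ≤ w := Real.rpow_nonneg (by norm_num) _
  have hw1 : w < 1 := Real.rpow_lt_one (by norm_num) (by norm_num) (by norm_num)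
  have hnat : Summable (fun k : ℕ => 4*((k:ℝ)^2+1)*w ^ k) := by
    have h1 := summable_pow_mul_geometric_of_norm_lt_one 2 (r := w)
      (by rwa [Real.norm_eq_abs, abs_of_nonneg hw0])
    have h2 := summable_geometric_of_lt_one hw0 hw1
    have := (h1.add h2).mul_left 4
    refine this.congr fun k => by push_cast; ring
  exact Summable.of_nat_of_neg (hnat.congr fun k => by simp) (hnat.congr fun k => by simp)

lemma sz_tendsto_tsum (j : ℕ) (hj : j ≤ 2) :
    Tendsto (fun r => ∑' n : ℤ, szTerm j n r) (𝓝[>](0:ℝ))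
      (𝓝 (∑' n : ℤ, if 2*n = (j:ℤ) then (n:ℝ)^j else 0)) := by
  apply tendsto_tsum_of_dominated_convergence sz_summable_bound (sz_tendsto_term j hj)
  filter_upwards [Ioo_mem_nhdsGT_of_mem
    (by norm_num : (0:ℝ) ∈ Set.Ico (0:ℝ) (1/2))] with r hr n
  rw [Real.norm_eq_abs]
  exact sz_term_bound j hj n r hr.1 hr.2.le

lemma sz_zpow_eq (r : ℝ) (hr : 0 < r) (k : ℤ) :
    (r^((1:ℝ)/5)) ^ k = r ^ ((k:ℝ)/5) := by
  rw [← Real.rpow_intCast (r ^ ((1:ℝ)/5)) k, ← Real.rpow_mul hr.le]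
  congr 1
  ring

lemma sz_zpow_eq' (r : ℝ) (hr : 0 < r) (k : ℤ) : r ^ k = r ^ ((k:ℝ)) :=
  (Real.rpow_intCast r k).symm

lemma alpha0_tendsto :
    Tendsto (fun r => alpha0 r (r^((1:ℝ)/5))) (𝓝[>](0:ℝ)) (𝓝 (1/(2*π))) := by
  have h := (sz_tendsto_tsum 0 (by norm_num)).const_mul (1/(2*π))
  have hval : (∑' n : ℤ, if 2*n = ((0:ℕ):ℤ) then (n:ℝ)^(0:ℕ) else 0) = 1 := by
    rw [show (fun n : ℤ => if 2*n = ((0:ℕ):ℤ) then (n:ℝ)^(0:ℕ) else 0)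
        = fun n : ℤ => if n = 0 then (1:ℝ) else 0 by
      funext n
      by_cases hn : n = 0
      · simp [hn]
      · rw [if_neg (by omega), if_neg hn]]
    exact tsum_ite_eq 0 1
  rw [hval, mul_one] at h
  refine h.congr' ?_
  filter_upwards [self_mem_nhdsWithin] with r hr
  unfold alpha0
  congr 1
  apply tsum_congr
  intro n
  rw [szTerm, pow_zero, one_mul, sz_zpow_eq r hr (2*n), sz_zpow_eq' r hr (2*n+1)]
  congr 2
  push_cast
  ring

lemma alpha1_tendsto :
    Tendsto (fun r => alpha1 r (r^((1:ℝ)/5))) (𝓝[>](0:ℝ)) (𝓝 0) := by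
  have h := (sz_tendsto_tsum 1 (by norm_num)).const_mul (1/(2*π))
  have hval : (∑' n : ℤ, if 2*n = ((1:ℕ):ℤ) then (n:ℝ)^(1:ℕ) else 0) = 0 := by
    rw [show (fun n : ℤ => if 2*n = ((1:ℕ):ℤ) then (n:ℝ)^(1:ℕ) else 0)
        = fun _ : ℤ => (0:ℝ) by
      funext n
      rw [if_neg (by omega)]]
    exact tsum_zero
  rw [hval, mul_zero] at h
  refine h.congr' ?_
  filter_upwards [self_mem_nhdsWithin] with r hr
  unfold alpha1
  congr 1
  apply tsum_congr
  intro n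
  rw [szTerm, pow_one, sz_zpow_eq r hr (2*n-1), sz_zpow_eq' r hr (2*n+1)]
  norm_num

lemma alpha2_tendsto :
    Tendsto (fun r => alpha2 r (r^((1:ℝ)/5))) (𝓝[>](0:ℝ)) (𝓝 (1/(2*π))) := by
  have h := (sz_tendsto_tsum 2 (by norm_num)).const_mul (1/(2*π))
  have hval : (∑' n : ℤ, if 2*n = ((2:ℕ):ℤ) then (n:ℝ)^(2:ℕ) else 0) = 1 := by
    rw [show (fun n : ℤ => if 2*n = ((2:ℕ):ℤ) then (n:ℝ)^(2:ℕ) else 0)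
        = fun n : ℤ => if n = 1 then (1:ℝ) else 0 by
      funext n
      by_cases hn : n = 1
      · simp [hn]
      · rw [if_neg (by omega), if_neg hn]]
    exact tsum_ite_eq 1 1
  rw [hval, mul_one] at h
  refine h.congr' ?_
  filter_upwards [self_mem_nhdsWithin] with r hr
  unfold alpha2
  congr 1
  apply tsum_congr
  intro n
  rw [szTerm, sz_zpow_eq r hr (2*n-2), sz_zpow_eq' r hr (2*n+1)]
  norm_num

/-- For the annulus `Ω_r = {r < |z| < 1}`, the Szegő metric at `r^{1/5}` in the unit direction
satisfies `lim_{r→0⁺} F_S^{Ω_r}(r^{1/5},1) = 1`. -/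
theorem szego_metric_annulus_at_fifth_root :
    Tendsto (fun r : ℝ => Real.sqrt (szegoMetricSq r (r ^ ((1:ℝ)/5))))
      (𝓝[>] (0:ℝ)) (𝓝 1) := by
  have hπ : (0:ℝ) < π := Real.pi_pos
  have hne : ((1:ℝ)/(2*π))^2 ≠ 0 := by positivity
  have hA0 := alpha0_tendsto
  have hA1 := alpha1_tendsto
  have hA2 := alpha2_tendsto
  have hmain : Tendsto (fun r : ℝ => szegoMetricSq r (r ^ ((1:ℝ)/5)))
      (𝓝[>] (0:ℝ)) (𝓝 (((1/(2*π)) * (1/(2*π)) - 0^2) / (1/(2*π))^2)) := by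
    exact ((hA0.mul hA2).sub (hA1.pow 2)).div (hA0.pow 2) hne
  have hval : ((1/(2*π)) * (1/(2*π)) - (0:ℝ)^2) / (1/(2*π))^2 = 1 := by
    field_simp
    ring
  rw [hval] at hmain
  have := (Real.continuous_sqrt.tendsto 1).comp hmain
  simpa [Function.comp_def] using this
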